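/- Let T ≥ 0, U ≥ 0, a ≥ 0, and C ≥ 0 be real numbers and let M : [0, T] × [0, U] → ℝ be continuous and nonnegative, satisfying M(t, u) ≤ a + C·∫₀ᵗ M(s, u) ds + C·∫₀ᵘ M(t, s) ds for all (t, u) ∈ [0, T] × [0, U]. Then M(t, u) ≤ a·exp(2C·(t + u)) for all (t, u) ∈ [0, T] × [0, U]. -/

import Mathlib

open MeasureTheory

lemma exp_interval_integral (c : ℝ) (hc : c ≠ 0) (t : ℝ) :
    ∫ s in (0:ℝ)..t, Real.exp (c*s) = (Real.exp (c*t) - 1)/c := by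
  have hder : ∀ s : ℝ, HasDerivAt (fun x => Real.exp (c*x)/c) (Real.exp (c*s)) s := by
    intro s
    have h1 : HasDerivAt (fun x : ℝ => c*x) c s := (hasDerivAt_id s).const_mul c |>.congr_deriv (by ring)
    have h3 := ((Real.hasDerivAt_exp (c*s)).comp s h1).div_const c
    convert h3 using 1
    exacts [rfl, rfl, rfl, by field_simp]
  rw [intervalIntegral.integral_eq_sub_of_hasDerivAt (fun s _ => hder s)
    (((Real.continuous_exp.comp (continuous_const.mul continuous_id)).intervalIntegrable 0 t))]
  simp
  ring

/-- A two-variable (Wendroff-type) Gronwall inequality: if the continuous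
nonnegative function `M` on `[0,T] × [0,U]` satisfies
`M(t,u) ≤ a + C·∫₀ᵗ M(s,u) ds + C·∫₀ᵘ M(t,s) ds`, then `M(t,u) ≤ a·exp(2C·(t+u))`. -/
theorem two_variable_gronwall
    (T U a C : ℝ) (hT : 0 ≤ T) (hU : 0 ≤ U) (ha : 0 ≤ a) (hC : 0 ≤ C)
    (M : ℝ → ℝ → ℝ)
    (hMcont : ContinuousOn (fun p : ℝ × ℝ => M p.1 p.2) (Set.Icc 0 T ×ˢ Set.Icc 0 U))
    (hM0 : ∀ t ∈ Set.Icc (0:ℝ) T, ∀ u ∈ Set.Icc (0:ℝ) U, 0 ≤ M t u)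
    (hineq : ∀ t ∈ Set.Icc (0:ℝ) T, ∀ u ∈ Set.Icc (0:ℝ) U,
      M t u ≤ a + C * (∫ s in (0:ℝ)..t, M s u) + C * (∫ s in (0:ℝ)..u, M t s)) :
    ∀ t ∈ Set.Icc (0:ℝ) T, ∀ u ∈ Set.Icc (0:ℝ) U,
      M t u ≤ a * Real.exp (2 * C * (t + u)) := by
  rcases eq_or_lt_of_le hC with hC0 | hCpos
  · -- C = 0
    intro t ht u hu
    have h := hineq t ht u hu
    rw [← hC0] at h ⊢
    simp at h ⊢
    have h1 : (1:ℝ) ≤ Real.exp 0 := by simp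
    nlinarith [Real.exp_pos (0:ℝ)]
  · -- C > 0
    set S : Set (ℝ × ℝ) := Set.Icc (0:ℝ) T ×ˢ Set.Icc (0:ℝ) U with hS
    have hScomp : IsCompact S := isCompact_Icc.prod isCompact_Icc
    have hSne : S.Nonempty := ⟨(0,0), ⟨⟨le_refl 0, hT⟩, ⟨le_refl 0, hU⟩⟩⟩
    set N : ℝ × ℝ → ℝ := fun p => M p.1 p.2 * Real.exp (-(2*C*(p.1+p.2))) with hN
    have hNcont : ContinuousOn N S :=
      hMcont.mul (Continuous.continuousOn (by fun_prop))
    obtain ⟨p, hpS, hpmax⟩ := hScomp.exists_isMaxOn hSne hNcont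
    obtain ⟨hp1, hp2⟩ := hpS
    set K : ℝ := N p with hKdef
    have hK0 : 0 ≤ K := mul_nonneg (hM0 _ hp1 _ hp2) (Real.exp_pos _).le
    -- key pointwise bound
    have key : ∀ q ∈ S, M q.1 q.2 ≤ K * Real.exp (2*C*(q.1+q.2)) := by
      intro q hq
      have h := hpmax hq
      have h2 : M q.1 q.2 * Real.exp (-(2*C*(q.1+q.2))) ≤ K := h
      have hpos := Real.exp_pos (2*C*(q.1+q.2))
      have := mul_le_mul_of_nonneg_right h2 hpos.le
      rwa [mul_assoc, ← Real.exp_add, neg_add_cancel, Real.exp_zero, mul_one] at this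
    -- continuity slices
    have hcont1 : ContinuousOn (fun s => M s p.2) (Set.Icc 0 T) := by
      have : ContinuousOn (fun s : ℝ => ((s, p.2) : ℝ × ℝ)) (Set.Icc 0 T) :=
        (continuous_id.prodMk continuous_const).continuousOn
      exact hMcont.comp this (fun s hs => ⟨hs, hp2⟩)
    have hcont2 : ContinuousOn (fun s => M p.1 s) (Set.Icc 0 U) := by
      have : ContinuousOn (fun s : ℝ => ((p.1, s) : ℝ × ℝ)) (Set.Icc 0 U) :=
        (continuous_const.prodMk continuous_id).continuousOn
      exact hMcont.comp this (fun s hs => ⟨hp1, hs⟩)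
    have h2C : (2*C) ≠ 0 := by positivity
    have hsplit : ∀ (k y z : ℝ), k * Real.exp (2*C*(y+z)) = k * Real.exp (2*C*z) * Real.exp ((2*C)*y) := by
      intro k y z; rw [show 2*C*(y+z) = 2*C*z + (2*C)*y by ring, Real.exp_add]; ring
    -- integral bound in first variable
    have hint1 : C * (∫ s in (0:ℝ)..p.1, M s p.2)
        ≤ K/2 * Real.exp (2*C*p.2) * (Real.exp (2*C*p.1) - 1) := by
      have hib : IntervalIntegrable (fun s => K * Real.exp (2*C*p.2) * Real.exp ((2*C)*s)) volume 0 p.1 :=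
        Continuous.intervalIntegrable (by fun_prop) 0 p.1
      have hif : IntervalIntegrable (fun s => M s p.2) volume 0 p.1 := by
        apply ContinuousOn.intervalIntegrable
        apply hcont1.mono
        rw [Set.uIcc_of_le hp1.1]
        exact Set.Icc_subset_Icc le_rfl hp1.2
      have hmono := intervalIntegral.integral_mono_on hp1.1 hif hib (by
        intro x hx
        have hxS : ((x, p.2) : ℝ × ℝ) ∈ S := ⟨⟨hx.1, hx.2.trans hp1.2⟩, hp2⟩
        have := key _ hxS
        calc M x p.2 ≤ K * Real.exp (2*C*(x+p.2)) := this
          _ = K * Real.exp (2*C*p.2) * Real.exp ((2*C)*x) := hsplit K x p.2)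
      have hcalc : ∫ s in (0:ℝ)..p.1, K * Real.exp (2*C*p.2) * Real.exp ((2*C)*s)
          = K * Real.exp (2*C*p.2) * ((Real.exp (2*C*p.1) - 1)/(2*C)) := by
        rw [intervalIntegral.integral_const_mul, exp_interval_integral (2*C) h2C]
      rw [hcalc] at hmono
      have := mul_le_mul_of_nonneg_left hmono hC
      calc C * (∫ s in (0:ℝ)..p.1, M s p.2)
          ≤ C * (K * Real.exp (2*C*p.2) * ((Real.exp (2*C*p.1) - 1)/(2*C))) := this
        _ = K/2 * Real.exp (2*C*p.2) * (Real.exp (2*C*p.1) - 1) := by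
            field_simp
    -- integral bound in second variable
    have hint2 : C * (∫ s in (0:ℝ)..p.2, M p.1 s)
        ≤ K/2 * Real.exp (2*C*p.1) * (Real.exp (2*C*p.2) - 1) := by
      have hib : IntervalIntegrable (fun s => K * Real.exp (2*C*p.1) * Real.exp ((2*C)*s)) volume 0 p.2 :=
        Continuous.intervalIntegrable (by fun_prop) 0 p.2
      have hif : IntervalIntegrable (fun s => M p.1 s) volume 0 p.2 := by
        apply ContinuousOn.intervalIntegrable
        apply hcont2.mono
        rw [Set.uIcc_of_le hp2.1]
        exact Set.Icc_subset_Icc le_rfl hp2.2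
      have hmono := intervalIntegral.integral_mono_on hp2.1 hif hib (by
        intro x hx
        have hxS : ((p.1, x) : ℝ × ℝ) ∈ S := ⟨hp1, ⟨hx.1, hx.2.trans hp2.2⟩⟩
        have := key _ hxS
        calc M p.1 x ≤ K * Real.exp (2*C*(p.1+x)) := this
          _ = K * Real.exp (2*C*p.1) * Real.exp ((2*C)*x) := by
              rw [show (2:ℝ)*C*(p.1+x) = 2*C*(x+p.1) by ring]; exact hsplit K x p.1)
      have hcalc : ∫ s in (0:ℝ)..p.2, K * Real.exp (2*C*p.1) * Real.exp ((2*C)*s)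
          = K * Real.exp (2*C*p.1) * ((Real.exp (2*C*p.2) - 1)/(2*C)) := by
        rw [intervalIntegral.integral_const_mul, exp_interval_integral (2*C) h2C]
      rw [hcalc] at hmono
      have := mul_le_mul_of_nonneg_left hmono hC
      calc C * (∫ s in (0:ℝ)..p.2, M p.1 s)
          ≤ C * (K * Real.exp (2*C*p.1) * ((Real.exp (2*C*p.2) - 1)/(2*C))) := this
        _ = K/2 * Real.exp (2*C*p.1) * (Real.exp (2*C*p.2) - 1) := by
            field_simp
    -- M at p equals K * exp
    have hMp : M p.1 p.2 = K * Real.exp (2*C*(p.1+p.2)) := by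
      rw [hKdef, hN]
      rw [mul_assoc, ← Real.exp_add, neg_add_cancel, Real.exp_zero, mul_one]
    have hXY : Real.exp (2*C*(p.1+p.2)) = Real.exp (2*C*p.1) * Real.exp (2*C*p.2) := by
      rw [← Real.exp_add]; ring_nf
    have hX1 : (1:ℝ) ≤ Real.exp (2*C*p.1) := Real.one_le_exp (by nlinarith [hp1.1])
    have hY1 : (1:ℝ) ≤ Real.exp (2*C*p.2) := Real.one_le_exp (by nlinarith [hp2.1])
    have hmain := hineq p.1 hp1 p.2 hp2
    have hKa : K ≤ a := by nlinarith [hmain, hint1, hint2, hMp, hXY, hK0, hX1, hY1]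
    intro t ht u hu
    have := key (t, u) ⟨ht, hu⟩
    have hpos := (Real.exp_pos (2*C*(t+u))).le
    calc M t u ≤ K * Real.exp (2*C*(t+u)) := this
      _ ≤ a * Real.exp (2*C*(t+u)) := mul_le_mul_of_nonneg_right hKa hpos
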